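/- Every nonempty compact tropically convex subset C of 𝕋ⁿ contains its coordinatewise supremum; that is, there is a unique element of C which is the coordinatewise maximum of all elements of C (the tropical barycenter). -/
import Mathlib


/-- Tropical convexity in `𝕋ⁿ` with `𝕋 = ℝ ∪ {-∞}` embedded in `EReal`. -/
def TropConvex {n : ℕ} (C : Set (Fin n → EReal)) : Prop :=
  ∀ u ∈ C, ∀ v ∈ C, ∀ a b : EReal, max a b = 0 →
    (fun i => max (a + u i) (b + v i)) ∈ C

/-- A nonempty compact tropically convex set contains its coordinatewise supremum,
which is the unique element of `C` dominating all elements of `C` (tropical barycenter). -/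
theorem tropical_barycenter_mem {n : ℕ} (C : Set (Fin n → EReal))
    (hne : C.Nonempty) (hcomp : IsCompact C) (hconv : TropConvex C) :
    (fun i => ⨆ x ∈ C, x i) ∈ C ∧ ∃! m, m ∈ C ∧ ∀ x ∈ C, x ≤ m := by
  have key : (fun i => ⨆ x ∈ C, x i) ∈ C := by
    rcases Nat.eq_zero_or_pos n with h0 | hpos
    · obtain ⟨x, hx⟩ := hne
      have : (fun i : Fin n => ⨆ x ∈ C, x i) = x := by
        funext i; exact absurd i.2 (by omega)
      rwa [this]
    · -- maximizers for each coordinate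
      have H : ∀ i, ∃ x ∈ C, ∀ y ∈ C, y i ≤ x i := by
        intro i
        obtain ⟨x, hx, hmax⟩ :=
          hcomp.exists_isMaxOn hne ((continuous_apply i).continuousOn)
        exact ⟨x, hx, fun y hy => hmax hy⟩
      choose g hgC hgmax using H
      -- sup over nonempty finsets of the g's is in C
      have closed : ∀ t : Finset (Fin n), ∀ ht : t.Nonempty,
          (fun j => t.sup' ht (fun i => g i j)) ∈ C := by
        intro t ht
        induction ht using Finset.Nonempty.cons_induction with
        | singleton a => simpa using hgC a
        | cons a t ha ht ih =>
          have := hconv (g a) (hgC a) _ ih 0 0 (by simp)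
          convert this using 1
          funext j
          rw [Finset.sup'_cons ht]; simp
      have hu : (Finset.univ : Finset (Fin n)).Nonempty := by
        exact Finset.univ_nonempty_iff.mpr ⟨⟨0, hpos⟩⟩
      have hmem := closed Finset.univ hu
      have heq : (fun j => Finset.univ.sup' hu (fun i => g i j))
          = (fun i => ⨆ x ∈ C, x i) := by
        funext j
        apply le_antisymm
        · exact Finset.sup'_le _ _ fun i _ =>
            le_iSup₂_of_le (g i) (hgC i) le_rfl
        · refine iSup₂_le fun y hy => ?_
          exact (hgmax j y hy).trans
            (Finset.le_sup' (fun i => g i j) (Finset.mem_univ j))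
      rwa [heq] at hmem
  refine ⟨key, ⟨fun i => ⨆ x ∈ C, x i, ⟨key, fun x hx j => le_iSup₂_of_le x hx le_rfl⟩,
    fun m ⟨hmC, hmax⟩ => le_antisymm (fun j => le_iSup₂_of_le (f := fun x (_ : x ∈ C) => x j) m hmC le_rfl) (hmax _ key)⟩⟩
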